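/- Let n ≥ 0 and k ≥ 0. In the polynomial ring ℤ[x_1, …, x_{n+1}, t], the complete homogeneous symmetric polynomial of degree k evaluated at the shifted variables satisfies h_k(x_1 + t, …, x_{n+1} + t) = ∑_{i=0}^{k} C(n+k, k−i) · h_i(x_1, …, x_{n+1}) · t^{k−i}. -/

import Mathlib

open MvPolynomial Polynomial Finset

section PascalSum

variable {M : Type*} [CommRing M]

private lemma sumA1 (x : M) (T : M) (h g : ℕ → M) (c : ℕ → M)
    (hrec : ∀ m, h (m + 1) = x * h m + g (m + 1)) (h0 : h 0 = 1) (g0 : g 0 = 1) (m : ℕ) :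
    ∑ j ∈ range (m + 2), c j * h (m + 1 - j) * T ^ j =
      x * ∑ j ∈ range (m + 1), c j * h (m - j) * T ^ j +
        ∑ j ∈ range (m + 2), c j * g (m + 1 - j) * T ^ j := by
  rw [sum_range_succ (fun j => c j * h (m + 1 - j) * T ^ j),
    sum_range_succ (fun j => c j * g (m + 1 - j) * T ^ j)]
  rw [Nat.sub_self, h0, g0]
  have : ∀ j ∈ range (m + 1),
      c j * h (m + 1 - j) * T ^ j =
        x * (c j * h (m - j) * T ^ j) + c j * g (m + 1 - j) * T ^ j := by
    intro j hj
    have hjm : j ≤ m := Nat.lt_succ_iff.mp (mem_range.mp hj)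
    have e : m + 1 - j = (m - j) + 1 := by omega
    rw [e, hrec]
    ring
  rw [sum_congr rfl this, sum_add_distrib, mul_sum]
  ring

private lemma sumA2 (T : M) (g : ℕ → M) (N m : ℕ) :
    ∑ j ∈ range (m + 2), ((N + 1).choose j : M) * g (m + 1 - j) * T ^ j =
      ∑ j ∈ range (m + 2), (N.choose j : M) * g (m + 1 - j) * T ^ j +
        T * ∑ j ∈ range (m + 1), (N.choose j : M) * g (m - j) * T ^ j := by
  rw [sum_range_succ' (fun j => ((N + 1).choose j : M) * g (m + 1 - j) * T ^ j),
    sum_range_succ' (fun j => ((N).choose j : M) * g (m + 1 - j) * T ^ j)]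
  rw [mul_sum]
  have : ∀ j ∈ range (m + 1),
      ((N + 1).choose (j + 1) : M) * g (m + 1 - (j + 1)) * T ^ (j + 1) =
        ((N.choose (j + 1) : M) * g (m + 1 - (j + 1)) * T ^ (j + 1)) +
          T * ((N.choose j : M) * g (m - j) * T ^ j) := by
    intro j hj
    have e : m + 1 - (j + 1) = m - j := by omega
    rw [e, Nat.choose_succ_succ]
    push_cast
    ring
  rw [sum_congr rfl this, sum_add_distrib]
  simp only [Nat.choose_zero_right, Nat.cast_one]
  ring

private lemma pascal_sum (x : M) (T : M) (h g : ℕ → M)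
    (hrec : ∀ m, h (m + 1) = x * h m + g (m + 1)) (h0 : h 0 = 1) (g0 : g 0 = 1) (N : ℕ) :
    ∀ k, (x + T) * (∑ j ∈ range (k + 1), (N.choose j : M) * h (k - j) * T ^ j) +
        ∑ j ∈ range (k + 2), (N.choose j : M) * g (k + 1 - j) * T ^ j =
      ∑ j ∈ range (k + 2), ((N + 1).choose j : M) * h (k + 1 - j) * T ^ j := by
  intro k
  induction k with
  | zero =>
    simp only [sum_range_succ, sum_range_one]
    norm_num [h0, g0, hrec 0]
    ring
  | succ k IHk =>
    rw [sumA1 x T h g (fun j => (N.choose j : M)) hrec h0 g0 k]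
    rw [sumA1 x T h g (fun j => ((N + 1).choose j : M)) hrec h0 g0 (k + 1)]
    rw [sumA2 T g N (k + 1)]
    rw [show ∑ j ∈ range (k + 1 + 1), ((N + 1).choose j : M) * h (k + 1 - j) * T ^ j =
        (x + T) * (∑ j ∈ range (k + 1), (N.choose j : M) * h (k - j) * T ^ j) +
          ∑ j ∈ range (k + 2), (N.choose j : M) * g (k + 1 - j) * T ^ j from IHk.symm]
    ring

end PascalSum

section HsymmLemmas

variable {σ : Type*} [Fintype σ] [DecidableEq σ]

private lemma hsymm_option (R : Type*) [CommSemiring R] (k : ℕ) :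
    hsymm (Option σ) R (k + 1) =
      X none * hsymm (Option σ) R k + rename some (hsymm σ R (k + 1)) := by
  rw [hsymm, Fintype.sum_equiv (symOptionSuccEquiv (α := σ))
      (fun s => ((s : Sym (Option σ) (k+1)).1.map X).prod)
      (fun u => (((symOptionSuccEquiv (α := σ)).symm u).1.map X).prod)
      (fun s => by simp only [Equiv.symm_apply_apply])]
  rw [Fintype.sum_sum_type]
  congr 1
  · rw [hsymm, Finset.mul_sum]
    refine Finset.sum_congr rfl fun s _ => ?_
    show (((SymOptionSuccEquiv.decode (Sum.inl s)).1.map X).prod) = _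
    simp [Sym.cons, Multiset.map_cons]
  · rw [hsymm, map_sum]
    refine Finset.sum_congr rfl fun s _ => ?_
    show (((SymOptionSuccEquiv.decode (Sum.inr s)).1.map X).prod) = _
    rw [SymOptionSuccEquiv.decode_inr]
    rw [← Multiset.prod_hom' _ (rename (R := R) (some : σ → Option σ))]
    simp [Sym.map, Multiset.map_map]

private lemma hsymm_unique (α : Type*) [Unique α] [DecidableEq α] [Fintype α]
    (R : Type*) [CommSemiring R] (k : ℕ) :
    hsymm α R k = X (default : α) ^ k := by
  rw [hsymm, Fintype.sum_unique]
  show (Multiset.map X (Multiset.replicate k (default : α))).prod = _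
  rw [Multiset.map_replicate, Multiset.prod_replicate]

end HsymmLemmas

/-- The statement of `hsymm_shift`, in `j`-indexed form, over an arbitrary variable type. -/
private def Stmt (σ : Type) [Fintype σ] [DecidableEq σ] (n k : ℕ) : Prop :=
  aeval (fun j : σ => (X j + MvPolynomial.C Polynomial.X : MvPolynomial σ (Polynomial ℤ)))
      (hsymm σ (Polynomial ℤ) k) =
    ∑ j ∈ Finset.range (k + 1),
      ((n + k).choose j : MvPolynomial σ (Polynomial ℤ)) *
        hsymm σ (Polynomial ℤ) (k - j) * MvPolynomial.C (Polynomial.X : Polynomial ℤ) ^ j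

private lemma stmt_base (k : ℕ) : Stmt (Fin 1) 0 k := by
  unfold Stmt
  rw [hsymm_unique, map_pow, MvPolynomial.aeval_X,
    add_comm (X (default : Fin 1)) (MvPolynomial.C Polynomial.X), add_pow]
  refine Finset.sum_congr rfl fun j hj => ?_
  rw [hsymm_unique, Nat.zero_add]
  ring

private lemma stmt_transport {σ τ : Type} [Fintype σ] [DecidableEq σ] [Fintype τ]
    [DecidableEq τ] (e : σ ≃ τ) {n k : ℕ} (h : Stmt σ n k) : Stmt τ n k := by
  unfold Stmt at h ⊢
  have happ := congrArg (rename (e : σ → τ)) h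
  rw [← AlgHom.comp_apply, comp_aeval] at happ
  simp only [map_add, rename_X, rename_C] at happ
  rw [show (fun i : σ => (X (e i) + MvPolynomial.C Polynomial.X : MvPolynomial τ (Polynomial ℤ))) =
      (fun j : τ => (X j + MvPolynomial.C Polynomial.X : MvPolynomial τ (Polynomial ℤ))) ∘ e
      from rfl,
    ← aeval_rename, rename_hsymm] at happ
  rw [happ, map_sum]
  refine Finset.sum_congr rfl fun j hj => ?_
  rw [map_mul, map_mul, map_pow, rename_C, rename_hsymm, map_natCast]

private lemma stmt_step {σ : Type} [Fintype σ] [DecidableEq σ] (n : ℕ)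
    (IH : ∀ k, Stmt σ n k) (k : ℕ) : Stmt (Option σ) (n + 1) k := by
  induction k with
  | zero =>
    unfold Stmt
    simp [hsymm_zero]
  | succ k IHk =>
    unfold Stmt at IHk ⊢
    have hρ : ∀ p : MvPolynomial σ (Polynomial ℤ),
        aeval (fun j : Option σ =>
            (X j + MvPolynomial.C Polynomial.X : MvPolynomial (Option σ) (Polynomial ℤ)))
            (rename some p) =
          rename some (aeval (fun j : σ =>
            (X j + MvPolynomial.C Polynomial.X : MvPolynomial σ (Polynomial ℤ))) p) := by
      intro p
      rw [aeval_rename, ← AlgHom.comp_apply, comp_aeval]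
      have hfun : ((fun j : Option σ =>
          (X j + MvPolynomial.C Polynomial.X : MvPolynomial (Option σ) (Polynomial ℤ))) ∘ some) =
          fun i : σ => rename (some : σ → Option σ)
            (X i + MvPolynomial.C Polynomial.X : MvPolynomial σ (Polynomial ℤ)) := by
        funext i
        simp
      rw [hfun]
    rw [hsymm_option (Polynomial ℤ) k, map_add, map_mul, MvPolynomial.aeval_X, hρ,
      IH (k + 1), IHk, map_sum]
    simp only [map_mul, map_pow, map_natCast, rename_C]
    have e1 : n + 1 + k = n + k + 1 := by omega
    have e2 : n + (k + 1) = n + k + 1 := by omega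
    have e3 : n + 1 + (k + 1) = n + k + 1 + 1 := by omega
    rw [e1, e2, e3]
    exact pascal_sum (X none) (MvPolynomial.C Polynomial.X)
      (fun m => hsymm (Option σ) (Polynomial ℤ) m)
      (fun m => rename some (hsymm σ (Polynomial ℤ) m))
      (fun m => hsymm_option (Polynomial ℤ) m)
      (hsymm_zero (Option σ) (Polynomial ℤ))
      (by show rename (some : σ → Option σ) (hsymm σ (Polynomial ℤ) 0) = 1
          rw [hsymm_zero, map_one]) (n + k + 1) k

private lemma stmt_key : ∀ n : ℕ, ∀ (σ : Type) [Fintype σ] [DecidableEq σ],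
    Fintype.card σ = n + 1 → ∀ k, Stmt σ n k := by
  intro n
  induction n with
  | zero =>
    intro σ _ _ hcard k
    exact stmt_transport (Fintype.equivFinOfCardEq hcard).symm (stmt_base k)
  | succ n IHn =>
    intro σ _ _ hcard k
    have e : Option (Fin (n + 1)) ≃ σ :=
      ((Fintype.equivFinOfCardEq hcard).trans (finSuccEquiv (n + 1))).symm
    exact stmt_transport e (stmt_step n (IHn (Fin (n + 1)) (by simp)) k)

/-- In `ℤ[x_1, …, x_{n+1}, t]` (formalized as multivariate polynomials in `n+1` variables
over `ℤ[t]`), the complete homogeneous symmetric polynomial of degree `k` satisfies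
`h_k(x_1 + t, …, x_{n+1} + t) = ∑_{i=0}^{k} C(n+k, k−i) · h_i(x_1, …, x_{n+1}) · t^{k−i}`. -/
theorem hsymm_shift (n k : ℕ) :
    MvPolynomial.aeval
        (fun j : Fin (n + 1) =>
          (MvPolynomial.X j + MvPolynomial.C (Polynomial.X : Polynomial ℤ) :
            MvPolynomial (Fin (n + 1)) (Polynomial ℤ)))
        (MvPolynomial.hsymm (Fin (n + 1)) (Polynomial ℤ) k) =
      ∑ i ∈ Finset.range (k + 1),
        (Nat.choose (n + k) (k - i) : MvPolynomial (Fin (n + 1)) (Polynomial ℤ)) *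
          MvPolynomial.hsymm (Fin (n + 1)) (Polynomial ℤ) i *
          MvPolynomial.C (Polynomial.X : Polynomial ℤ) ^ (k - i) := by
  have h := stmt_key n (Fin (n + 1)) (by simp) k
  unfold Stmt at h
  rw [h, ← Finset.sum_range_reflect]
  refine Finset.sum_congr rfl fun i hi => ?_
  have hik : i ≤ k := Nat.lt_succ_iff.mp (Finset.mem_range.mp hi)
  have e1 : k + 1 - 1 - i = k - i := by omega
  have e2 : k - (k - i) = i := by omega
  rw [e1, e2]
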